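/- arXiv:1708.08820 — 2 statements merged into one kernel-verified Lean document; each statement's English description precedes it below -/
import Mathlib

section
/- For B > 0 define the transition kernel K_B(θ, θ′) = exp(B cos(θ′ − θ)) / ∫_{−π}^{π} exp(B cos φ) dφ on (−π,π], and the transition operator (𝒦_B f)(θ) = ∫_{−π}^{π} K_B(θ, θ′) f(θ′) dθ′. Let f : ℝ → ℝ be 2π-periodic and twice continuously differentiable, and let (B_n) be positive reals with B_n / n → b ∈ (0,∞). Then for every θ ∈ ℝ, n · ( (𝒦_{B_n} f)(θ) − f(θ) ) → f″(θ) / (2b) as n → ∞. -/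
open MeasureTheory Real Filter intervalIntegral

/-- The one-step transition kernel of the XY chain at inverse temperature `B`:
`K_B(θ, θ') = exp(B cos(θ' - θ)) / ∫_{-π}^{π} exp(B cos φ) dφ`. -/
noncomputable def xyKernel (B θ θ' : ℝ) : ℝ :=
  Real.exp (B * Real.cos (θ' - θ)) / ∫ φ in (-π)..π, Real.exp (B * Real.cos φ)

/-- The transition operator `(𝒦_B f)(θ) = ∫_{-π}^{π} K_B(θ, θ') f(θ') dθ'`. -/
noncomputable def xyTransOp (B : ℝ) (f : ℝ → ℝ) (θ : ℝ) : ℝ :=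
  ∫ θ' in (-π)..π, xyKernel B θ θ' * f θ'

/-- The partition function. -/
noncomputable def Zxy (B : ℝ) : ℝ := ∫ φ in (-π)..π, Real.exp (B * Real.cos φ)

lemma Zxy_pos (B : ℝ) : 0 < Zxy B := by
  apply intervalIntegral_pos_of_pos
  · exact (Real.continuous_exp.comp (continuous_const.mul Real.continuous_cos)).intervalIntegrable _ _
  · intro x; exact Real.exp_pos _
  · linarith [Real.pi_pos]

lemma Zxy_lower {B η : ℝ} (hB : 0 ≤ B) (h0 : 0 < η) (hπ : η ≤ π) :
    2 * η * Real.exp (B * Real.cos η) ≤ Zxy B := by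
  have hcont : Continuous fun φ : ℝ => Real.exp (B * Real.cos φ) :=
    Real.continuous_exp.comp (continuous_const.mul Real.continuous_cos)
  have h1 : (∫ φ in (-π)..(-η), Real.exp (B * Real.cos φ)) ≥ 0 :=
    intervalIntegral.integral_nonneg (by linarith) (fun u _ => (Real.exp_pos _).le)
  have h2 : (∫ φ in (η)..(π), Real.exp (B * Real.cos φ)) ≥ 0 :=
    intervalIntegral.integral_nonneg (by linarith) (fun u _ => (Real.exp_pos _).le)
  have h3 : 2 * η * Real.exp (B * Real.cos η) ≤ ∫ φ in (-η)..η, Real.exp (B * Real.cos φ) := by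
    have := intervalIntegral.integral_mono_on (μ := MeasureTheory.volume) (a := -η) (b := η) (by linarith)
      (intervalIntegrable_const)
      (hcont.intervalIntegrable _ _)
      (fun x hx => by
        have hx1 : |x| ≤ η := abs_le.2 ⟨hx.1, hx.2⟩
        have : Real.cos η ≤ Real.cos x := by
          rw [← Real.cos_abs x]
          exact Real.cos_le_cos_of_nonneg_of_le_pi (abs_nonneg x) hπ hx1
        exact Real.exp_le_exp.2 (mul_le_mul_of_nonneg_left this hB))
    have hc : (∫ _ in (-η)..η, Real.exp (B * Real.cos η)) = 2 * η * Real.exp (B * Real.cos η) := by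
      rw [intervalIntegral.integral_const, smul_eq_mul]; ring
    linarith
  have hsplit : Zxy B = (∫ φ in (-π)..(-η), Real.exp (B * Real.cos φ)) +
      ((∫ φ in (-η)..η, Real.exp (B * Real.cos φ)) + ∫ φ in (η)..π, Real.exp (B * Real.cos φ)) := by
    rw [intervalIntegral.integral_add_adjacent_intervals (hcont.intervalIntegrable _ _)
      (hcont.intervalIntegrable _ _),
      intervalIntegral.integral_add_adjacent_intervals (hcont.intervalIntegrable _ _)
      (hcont.intervalIntegrable _ _)]
    rfl
  linarith


lemma contE (B : ℝ) : Continuous fun φ : ℝ => Real.exp (B * Real.cos φ) :=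
  Real.continuous_exp.comp (continuous_const.mul Real.continuous_cos)

lemma int_exp_sin (B : ℝ) (hB : B ≠ 0) :
    ∫ φ in (-π)..π, Real.exp (B * Real.cos φ) * Real.sin φ = 0 := by
  have h : ∀ x ∈ Set.uIcc (-π) π, HasDerivAt (fun φ => -(Real.exp (B * Real.cos φ) / B))
      (Real.exp (B * Real.cos x) * Real.sin x) x := by
    intro x _
    have h1 : HasDerivAt (fun φ : ℝ => B * Real.cos φ) (B * (-Real.sin x)) x :=
      (Real.hasDerivAt_cos x).const_mul B
    have h2 := (h1.exp.div_const B).neg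
    refine h2.congr_deriv ?_
    field_simp
  rw [intervalIntegral.integral_eq_sub_of_hasDerivAt h
    (((contE B).mul Real.continuous_sin).intervalIntegrable _ _)]
  simp [Real.cos_neg]

lemma int_exp_phi_sin (B : ℝ) (hB : 0 < B) :
    ∫ φ in (-π)..π, Real.exp (B * Real.cos φ) * (φ * Real.sin φ)
      = (Zxy B - 2 * π * Real.exp (-B)) / B := by
  have h : ∀ x ∈ Set.uIcc (-π) π, HasDerivAt (fun φ => φ * Real.exp (B * Real.cos φ))
      (Real.exp (B * Real.cos x) - B * (Real.exp (B * Real.cos x) * (x * Real.sin x))) x := by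
    intro x _
    have h1 : HasDerivAt (fun φ : ℝ => B * Real.cos φ) (B * (-Real.sin x)) x :=
      (Real.hasDerivAt_cos x).const_mul B
    have h2 := (hasDerivAt_id x).mul h1.exp
    refine h2.congr_deriv ?_
    simp only [id]; ring
  have hint1 := (contE B).intervalIntegrable (μ := MeasureTheory.volume) (-π) π
  have hint2 : IntervalIntegrable
      (fun φ => B * (Real.exp (B * Real.cos φ) * (φ * Real.sin φ))) MeasureTheory.volume (-π) π :=
    (continuous_const.mul ((contE B).mul (continuous_id.mul Real.continuous_sin))).intervalIntegrable _ _
  have hibp := intervalIntegral.integral_eq_sub_of_hasDerivAt h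
    (hint1.sub hint2)
  rw [intervalIntegral.integral_sub hint1 hint2, intervalIntegral.integral_const_mul] at hibp
  have hbdry : π * Real.exp (B * Real.cos π) - (-π) * Real.exp (B * Real.cos (-π))
      = 2 * π * Real.exp (-B) := by
    simp [Real.cos_neg, Real.cos_pi]; ring
  rw [hbdry] at hibp
  have hZ : Zxy B = ∫ φ in (-π)..π, Real.exp (B * Real.cos φ) := rfl
  rw [eq_div_iff hB.ne']
  linarith [hibp]


lemma phi_sin_nonneg {x : ℝ} (h1 : -π ≤ x) (h2 : x ≤ π) : 0 ≤ x * Real.sin x := by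
  rcases le_or_gt 0 x with hx | hx
  · exact mul_nonneg hx (Real.sin_nonneg_of_nonneg_of_le_pi hx h2)
  · have hs : Real.sin x ≤ 0 := by
      have := Real.sin_nonneg_of_nonneg_of_le_pi (x := -x) (by linarith) (by linarith)
      rw [Real.sin_neg] at this; linarith
    nlinarith

lemma sq_le_mul_sin {x : ℝ} (h : |x| ≤ 1) : (3/4) * x^2 ≤ x * Real.sin x := by
  have key : ∀ y : ℝ, 0 ≤ y → y ≤ 1 → (3/4) * y^2 ≤ y * Real.sin y := by
    intro y h0 h1
    rcases eq_or_lt_of_le h0 with h' | h'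
    · simp [← h']
    · have hs := Real.sin_gt_sub_cube h'
      have hy2 : y^2 ≤ 1 := by nlinarith
      nlinarith [mul_lt_mul_of_pos_left hs h']
  rcases le_or_gt 0 x with hx | hx
  · exact key x hx (by rwa [abs_of_nonneg hx] at h)
  · have := key (-x) (by linarith) (by rwa [abs_of_neg hx] at h)
    rw [Real.sin_neg] at this; nlinarith

lemma abs_sub_sin {x : ℝ} (h : |x| ≤ 1) : |x - Real.sin x| ≤ |x|^3 / 4 := by
  have key : ∀ y : ℝ, 0 ≤ y → y ≤ 1 → |y - Real.sin y| ≤ y^3 / 4 := by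
    intro y h0 h1
    have hs := Real.sin_le h0
    have hle : y - Real.sin y ≤ y^3/4 := by
      rcases eq_or_lt_of_le h0 with h' | h'
      · simp [← h']
      · linarith [Real.sin_gt_sub_cube h', pow_pos h' 3]
    rw [abs_of_nonneg (by linarith)]; exact hle
  rcases le_or_gt 0 x with hx | hx
  · rw [abs_of_nonneg hx]; exact key x hx (by rwa [abs_of_nonneg hx] at h)
  · have h2 := key (-x) (by linarith) (by rwa [abs_of_neg hx] at h)
    rw [Real.sin_neg] at h2
    rw [abs_of_neg hx]
    calc |x - Real.sin x| = |(-x) - (-Real.sin x)| := by rw [← abs_neg]; ring_nf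
      _ ≤ (-x)^3/4 := h2
      _ = (-x)^3/4 := rfl

lemma key_tendsto (r : ℝ → ℝ) (hr : Continuous r)
    (hsmall : ∀ ε > 0, ∃ δ, 0 < δ ∧ δ ≤ 1 ∧ ∀ φ, |φ| ≤ δ → |r φ| ≤ ε * φ^2) :
    Tendsto (fun Bv : ℝ => Bv * (∫ φ in (-π)..π, Real.exp (Bv * Real.cos φ) * r φ) / Zxy Bv)
      atTop (nhds 0) := by
  have hπ3 : (3:ℝ) < π := by linarith [Real.pi_gt_three]
  rw [NormedAddCommGroup.tendsto_nhds_zero]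
  intro ε hε
  obtain ⟨δ, hδ0, hδ1, hδ⟩ := hsmall (ε/4) (by linarith)
  obtain ⟨M, hM⟩ := (isCompact_Icc (a := -π) (b := π)).exists_bound_of_continuousOn hr.continuousOn
  have hM0 : 0 ≤ M := le_trans (norm_nonneg (r 0)) (hM 0 ⟨by linarith, by linarith⟩)
  have hδπ : δ < π := by linarith
  set c₀ := Real.cos (δ/2) - Real.cos δ with hc₀def
  have hc₀ : 0 < c₀ := by
    have := Real.cos_lt_cos_of_nonneg_of_le_pi (by linarith : (0:ℝ) ≤ δ/2) hδπ.le (by linarith)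
    simp only [hc₀def]; linarith
  have htail0 : Tendsto (fun Bv : ℝ => 2 * π * M / δ * (Bv * Real.exp (-(c₀ * Bv)))) atTop (nhds 0) := by
    have h1 := Real.tendsto_pow_mul_exp_neg_atTop_nhds_zero 1
    have h2 : Tendsto (fun Bv : ℝ => c₀ * Bv) atTop atTop :=
      Tendsto.const_mul_atTop hc₀ tendsto_id
    have h3 := (h1.comp h2).const_mul (2 * π * M / (δ * c₀))
    rw [mul_zero] at h3
    refine h3.congr fun Bv => ?_
    simp only [Function.comp_apply, pow_one]
    field_simp
  filter_upwards [eventually_ge_atTop (1:ℝ),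
    htail0.eventually_lt_const (show (0:ℝ) < ε/2 by linarith)] with Bv hB1 htl
  have hBv : (0:ℝ) < Bv := lt_of_lt_of_le one_pos hB1
  have hZ := Zxy_pos Bv
  set Z := Zxy Bv with hZdef
  set I := ∫ φ in (-π)..π, Real.exp (Bv * Real.cos φ) * r φ with hIdef
  have hgc : Continuous fun φ => Real.exp (Bv * Real.cos φ) * r φ := (contE Bv).mul hr
  -- pointwise bound on tails
  have htailpt : ∀ x, -π ≤ x → x ≤ π → δ ≤ |x| →
      |Real.exp (Bv * Real.cos x) * r x| ≤ M * Real.exp (Bv * Real.cos δ) := by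
    intro x hx1 hx2 hx3
    have hcos : Real.cos x ≤ Real.cos δ := by
      rw [← Real.cos_abs x]
      exact Real.cos_le_cos_of_nonneg_of_le_pi hδ0.le (abs_le.2 ⟨hx1, hx2⟩) hx3
    rw [abs_mul, abs_of_pos (Real.exp_pos _)]
    have h1 : |r x| ≤ M := hM x ⟨hx1, hx2⟩
    have h2 : Real.exp (Bv * Real.cos x) ≤ Real.exp (Bv * Real.cos δ) :=
      Real.exp_le_exp.2 (mul_le_mul_of_nonneg_left hcos hBv.le)
    calc Real.exp (Bv * Real.cos x) * |r x| ≤ Real.exp (Bv * Real.cos δ) * M := by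
          exact mul_le_mul h2 h1 (abs_nonneg _) (Real.exp_pos _).le
      _ = M * Real.exp (Bv * Real.cos δ) := by ring
  -- tail integrals
  have hA1 : (∫ φ in (-π)..(-δ), |Real.exp (Bv * Real.cos φ) * r φ|)
      ≤ (π - δ) * (M * Real.exp (Bv * Real.cos δ)) := by
    have := intervalIntegral.integral_mono_on (μ := MeasureTheory.volume) (a := -π) (b := -δ)
      (by linarith) (hgc.abs.intervalIntegrable _ _) intervalIntegrable_const
      (fun x hx => htailpt x (by linarith [hx.1]) (by linarith [hx.2])
        (le_trans (by linarith [hx.2]) (neg_le_abs x)))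
    refine this.trans_eq ?_
    rw [intervalIntegral.integral_const, smul_eq_mul]; ring
  have hA3 : (∫ φ in δ..π, |Real.exp (Bv * Real.cos φ) * r φ|)
      ≤ (π - δ) * (M * Real.exp (Bv * Real.cos δ)) := by
    have := intervalIntegral.integral_mono_on (μ := MeasureTheory.volume) (a := δ) (b := π)
      (by linarith) (hgc.abs.intervalIntegrable _ _) intervalIntegrable_const
      (fun x hx => htailpt x (by linarith [hx.1]) hx.2
        (hx.1.trans (le_abs_self x)))
    refine this.trans_eq ?_
    rw [intervalIntegral.integral_const, smul_eq_mul]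
  -- middle integral
  have hmidc : Continuous fun φ => Real.exp (Bv * Real.cos φ) * ((ε/3) * (φ * Real.sin φ)) :=
    (contE Bv).mul (continuous_const.mul (continuous_id.mul Real.continuous_sin))
  have hA2 : (∫ φ in (-δ)..δ, |Real.exp (Bv * Real.cos φ) * r φ|)
      ≤ ∫ φ in (-δ)..δ, Real.exp (Bv * Real.cos φ) * ((ε/3) * (φ * Real.sin φ)) := by
    apply intervalIntegral.integral_mono_on (μ := MeasureTheory.volume) (by linarith)
      (hgc.abs.intervalIntegrable _ _) (hmidc.intervalIntegrable _ _)
    intro x hx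
    have hxd : |x| ≤ δ := abs_le.2 ⟨hx.1, hx.2⟩
    have h1 : |r x| ≤ (ε/4) * x^2 := hδ x hxd
    have h2 : (3/4) * x^2 ≤ x * Real.sin x := sq_le_mul_sin (le_trans hxd hδ1)
    rw [abs_mul, abs_of_pos (Real.exp_pos _)]
    have hexp := (Real.exp_pos (Bv * Real.cos x)).le
    have h3 : (ε/4) * x^2 ≤ (ε/3) * (x * Real.sin x) := by
      nlinarith [mul_le_mul_of_nonneg_left h2 (show (0:ℝ) ≤ ε/3 by linarith)]
    calc Real.exp (Bv * Real.cos x) * |r x|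
        ≤ Real.exp (Bv * Real.cos x) * ((ε/4) * x^2) := mul_le_mul_of_nonneg_left h1 hexp
      _ ≤ Real.exp (Bv * Real.cos x) * ((ε/3) * (x * Real.sin x)) :=
        mul_le_mul_of_nonneg_left h3 hexp
  -- extend middle integral to the whole interval
  have hmid_nonneg : ∀ u ∈ Set.Icc (-π) π, 0 ≤ Real.exp (Bv * Real.cos u) * ((ε/3) * (u * Real.sin u)) :=
    fun u hu => mul_nonneg (Real.exp_pos _).le
      (mul_nonneg (by linarith) (phi_sin_nonneg hu.1 hu.2))
  have hA2' : (∫ φ in (-δ)..δ, Real.exp (Bv * Real.cos φ) * ((ε/3) * (φ * Real.sin φ)))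
      ≤ ∫ φ in (-π)..π, Real.exp (Bv * Real.cos φ) * ((ε/3) * (φ * Real.sin φ)) := by
    have e1 : (∫ φ in (-π)..(-δ), Real.exp (Bv * Real.cos φ) * ((ε/3) * (φ * Real.sin φ))) ≥ 0 :=
      intervalIntegral.integral_nonneg (by linarith)
        (fun u hu => hmid_nonneg u ⟨hu.1, by linarith [hu.2]⟩)
    have e2 : (∫ φ in δ..π, Real.exp (Bv * Real.cos φ) * ((ε/3) * (φ * Real.sin φ))) ≥ 0 :=
      intervalIntegral.integral_nonneg (by linarith)
        (fun u hu => hmid_nonneg u ⟨by linarith [hu.1], hu.2⟩)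
    have hsp : (∫ φ in (-π)..π, Real.exp (Bv * Real.cos φ) * ((ε/3) * (φ * Real.sin φ)))
        = (∫ φ in (-π)..(-δ), Real.exp (Bv * Real.cos φ) * ((ε/3) * (φ * Real.sin φ)))
        + ((∫ φ in (-δ)..δ, Real.exp (Bv * Real.cos φ) * ((ε/3) * (φ * Real.sin φ)))
        + ∫ φ in δ..π, Real.exp (Bv * Real.cos φ) * ((ε/3) * (φ * Real.sin φ))) := by
      rw [intervalIntegral.integral_add_adjacent_intervals (hmidc.intervalIntegrable _ _)
        (hmidc.intervalIntegrable _ _),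
        intervalIntegral.integral_add_adjacent_intervals (hmidc.intervalIntegrable _ _)
        (hmidc.intervalIntegrable _ _)]
    linarith
  have hmidval : (∫ φ in (-π)..π, Real.exp (Bv * Real.cos φ) * ((ε/3) * (φ * Real.sin φ)))
      ≤ (ε/3) * (Z / Bv) := by
    have heq : (∫ φ in (-π)..π, Real.exp (Bv * Real.cos φ) * ((ε/3) * (φ * Real.sin φ)))
        = (ε/3) * ((Z - 2 * π * Real.exp (-Bv)) / Bv) := by
      rw [show (fun φ => Real.exp (Bv * Real.cos φ) * ((ε/3) * (φ * Real.sin φ)))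
          = (fun φ => (ε/3) * (Real.exp (Bv * Real.cos φ) * (φ * Real.sin φ))) by
        funext φ; ring]
      rw [intervalIntegral.integral_const_mul, int_exp_phi_sin Bv hBv]
    rw [heq]
    have hmono : (Z - 2 * π * Real.exp (-Bv)) / Bv ≤ Z / Bv := by
      gcongr
      nlinarith [Real.exp_pos (-Bv), Real.pi_pos]
    exact mul_le_mul_of_nonneg_left hmono (by linarith)
  have hsplitabs : (∫ φ in (-π)..π, |Real.exp (Bv * Real.cos φ) * r φ|)
      = (∫ φ in (-π)..(-δ), |Real.exp (Bv * Real.cos φ) * r φ|)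
      + ((∫ φ in (-δ)..δ, |Real.exp (Bv * Real.cos φ) * r φ|)
      + ∫ φ in δ..π, |Real.exp (Bv * Real.cos φ) * r φ|) := by
    rw [intervalIntegral.integral_add_adjacent_intervals (hgc.abs.intervalIntegrable _ _)
      (hgc.abs.intervalIntegrable _ _),
      intervalIntegral.integral_add_adjacent_intervals (hgc.abs.intervalIntegrable _ _)
      (hgc.abs.intervalIntegrable _ _)]
  have hIle : |I| ≤ (ε/3) * (Z / Bv) + 2 * π * (M * Real.exp (Bv * Real.cos δ)) := by
    have h0 := intervalIntegral.abs_integral_le_integral_abs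
      (μ := MeasureTheory.volume) (a := -π) (b := π)
      (f := fun φ => Real.exp (Bv * Real.cos φ) * r φ) (by linarith)
    rw [hsplitabs] at h0
    have h1 := hA2.trans (hA2'.trans hmidval)
    rw [← hIdef] at h0
    nlinarith [mul_nonneg hM0 (Real.exp_pos (Bv * Real.cos δ)).le, hδ0]
  have hZlow : δ * Real.exp (Bv * Real.cos (δ/2)) ≤ Z := by
    have h := Zxy_lower (B := Bv) hBv.le (show (0:ℝ) < δ/2 by linarith) (by linarith)
    calc δ * Real.exp (Bv * Real.cos (δ/2)) = 2*(δ/2) * Real.exp (Bv * Real.cos (δ/2)) := by ring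
      _ ≤ Z := h
  rw [Real.norm_eq_abs, abs_div, abs_mul, abs_of_pos hBv, abs_of_pos hZ]
  calc Bv * |I| / Z
      ≤ Bv * ((ε/3) * (Z/Bv) + 2*π*(M*Real.exp (Bv * Real.cos δ))) / Z := by gcongr
    _ = ε/3 + Bv * (2*π*(M*Real.exp (Bv*Real.cos δ))) / Z := by field_simp
    _ ≤ ε/3 + Bv * (2*π*(M*Real.exp (Bv*Real.cos δ))) / (δ * Real.exp (Bv*Real.cos (δ/2))) := by
        gcongr
    _ = ε/3 + 2*π*M/δ * (Bv * Real.exp (-(c₀*Bv))) := by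
        rw [show -(c₀*Bv) = Bv * Real.cos δ - Bv * Real.cos (δ/2) by rw [hc₀def]; ring,
          Real.exp_sub]
        field_simp
    _ < ε/3 + ε/2 := by linarith
    _ ≤ ε := by linarith

lemma abs_le_of_mem_uIcc {u y : ℝ} (h : u ∈ Set.uIcc 0 y) : |u| ≤ |y| := by
  rcases Set.mem_uIcc.mp h with ⟨h1, h2⟩ | ⟨h1, h2⟩
  · rw [abs_of_nonneg h1]; exact h2.trans (le_abs_self y)
  · rw [abs_of_nonpos h2]; exact (neg_le_neg h1).trans (neg_le_abs y)

lemma mvt_abs {g g' : ℝ → ℝ} {C y : ℝ} (hd : ∀ x, HasDerivAt g (g' x) x)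
    (hC : ∀ t ∈ Set.uIcc 0 y, |g' t| ≤ C) : |g y - g 0| ≤ C * |y| := by
  have h := Convex.norm_image_sub_le_of_norm_hasDerivWithin_le
    (f := g) (f' := g') (s := Set.uIcc 0 y) (C := C)
    (fun x _ => (hd x).hasDerivWithinAt) (fun x hx => hC x hx) (convex_uIcc 0 y)
    Set.left_mem_uIcc Set.right_mem_uIcc
  simpa [Real.norm_eq_abs] using h

set_option maxHeartbeats 1000000 in
lemma taylor_small (f : ℝ → ℝ) (hf : ContDiff ℝ 2 f) (θ : ℝ) :
    ∀ ε > 0, ∃ δ, 0 < δ ∧ δ ≤ 1 ∧ ∀ φ, |φ| ≤ δ →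
      |f (θ + φ) - f θ - deriv f θ * Real.sin φ
        - (iteratedDeriv 2 f θ / 2) * (φ * Real.sin φ)| ≤ ε * φ^2 := by
  intro ε hε
  have hdf : Differentiable ℝ f := hf.differentiable (by norm_num)
  have h2 : ContDiff ℝ ((1 : WithTop ℕ∞) + 1) f := by
    have h12 : ((1 : WithTop ℕ∞) + 1) = 2 := by norm_num
    rw [h12]; exact hf
  have hd1 : ContDiff ℝ 1 (deriv f) := (contDiff_succ_iff_deriv.mp h2).2.2
  have hdf' : Differentiable ℝ (deriv f) := hd1.differentiable one_ne_zero
  have h21 : iteratedDeriv 2 f = deriv (deriv f) := by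
    rw [show (2 : ℕ) = 1 + 1 from rfl, iteratedDeriv_succ, iteratedDeriv_one]
  have hcont2 : Continuous (deriv (deriv f)) := by
    rw [← h21]
    exact hf.continuous_iteratedDeriv 2 (by norm_num)
  set a := deriv f θ with hadef
  set c := iteratedDeriv 2 f θ with hcdef
  have hc' : c = deriv (deriv f) θ := by rw [hcdef, h21]
  -- continuity of the second derivative at θ
  obtain ⟨δ₁, hδ₁0, hδ₁⟩ := Metric.continuousAt_iff.mp hcont2.continuousAt (ε/3) (by linarith)
  set K := |a| + |c| + 1 with hKdef
  have hK : 0 < K := by positivity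
  set δ := min 1 (min (δ₁/2) (ε/K)) with hδdef
  have hδ0 : 0 < δ := by
    apply lt_min (by norm_num)
    exact lt_min (by linarith) (by positivity)
  have hδle1 : δ ≤ 1 := min_le_left _ _
  have hδleδ₁ : δ ≤ δ₁/2 := le_trans (min_le_right _ _) (min_le_left _ _)
  have hδleεK : δ ≤ ε/K := le_trans (min_le_right _ _) (min_le_right _ _)
  refine ⟨δ, hδ0, hδle1, ?_⟩
  intro φ hφ
  -- the quadratic Taylor remainder
  set g₂ : ℝ → ℝ := fun s => deriv f (θ + s) - deriv f θ - c * s with hg₂def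
  set g₁ : ℝ → ℝ := fun s => f (θ + s) - f θ - a * s - (c/2) * s^2 with hg₁def
  have hg₂d : ∀ t, HasDerivAt g₂ (deriv (deriv f) (θ + t) - c) t := by
    intro t
    have h1 : HasDerivAt (fun s : ℝ => θ + s) 1 t := (hasDerivAt_id t).const_add θ
    have h2' : HasDerivAt (deriv f) (deriv (deriv f) (θ + t)) (θ + t) :=
      (hdf' (θ + t)).hasDerivAt
    have h3 := (h2'.comp t h1).sub_const (deriv f θ)
    have h4 := h3.sub ((hasDerivAt_id t).const_mul c)
    refine h4.congr_deriv ?_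
    ring
  have hg₁d : ∀ t, HasDerivAt g₁ (g₂ t) t := by
    intro t
    have h1 : HasDerivAt (fun s : ℝ => θ + s) 1 t := (hasDerivAt_id t).const_add θ
    have h2' : HasDerivAt f (deriv f (θ + t)) (θ + t) := (hdf (θ + t)).hasDerivAt
    have h3 := ((h2'.comp t h1).sub_const (f θ)).sub ((hasDerivAt_id t).const_mul a)
    have h4 := h3.sub ((hasDerivAt_pow 2 t).const_mul (c/2))
    refine h4.congr_deriv ?_
    simp [hg₂def]
    ring
  have hg₂bound : ∀ t, |t| ≤ δ → |g₂ t| ≤ (ε/3) * |t| := by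
    intro t ht
    have : |g₂ t - g₂ 0| ≤ (ε/3) * |t| := by
      apply mvt_abs hg₂d
      intro u hu
      have hu' : |u| ≤ |t| := abs_le_of_mem_uIcc hu
      have hdist : dist (θ + u) θ < δ₁ := by
        rw [Real.dist_eq]
        have : |θ + u - θ| = |u| := by ring_nf
        rw [this]
        linarith [ht, hu']
      have hlt := hδ₁ hdist
      rw [Real.dist_eq] at hlt
      rw [hc']
      exact hlt.le
    simpa [hg₂def] using this
  have hg₁bound : |g₁ φ| ≤ (ε/3) * φ^2 := by
    have h' : |g₁ φ - g₁ 0| ≤ ((ε/3) * |φ|) * |φ| := by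
      apply mvt_abs hg₁d
      intro u hu
      have hu' : |u| ≤ |φ| := abs_le_of_mem_uIcc hu
      calc |g₂ u| ≤ (ε/3) * |u| := hg₂bound u (hu'.trans hφ)
        _ ≤ (ε/3) * |φ| := by nlinarith
    have h0 : g₁ 0 = 0 := by simp [hg₁def]
    rw [h0, sub_zero] at h'
    calc |g₁ φ| ≤ ((ε/3) * |φ|) * |φ| := h'
      _ = (ε/3) * φ^2 := by rw [← sq_abs φ]; ring
  -- assemble
  have hφ1 : |φ| ≤ 1 := hφ.trans hδle1
  have hsin := abs_sub_sin hφ1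
  have hid : f (θ + φ) - f θ - a * Real.sin φ - (c/2) * (φ * Real.sin φ)
      = g₁ φ + a * (φ - Real.sin φ) + (c/2) * (φ * (φ - Real.sin φ)) := by
    simp only [hg₁def]
    ring
  have habs3 : |φ|^3 = |φ| * φ^2 := by rw [← sq_abs φ]; ring
  have hB : |a * (φ - Real.sin φ)| ≤ (ε/4) * φ^2 := by
    rw [abs_mul]
    calc |a| * |φ - Real.sin φ| ≤ |a| * (|φ|^3/4) :=
          mul_le_mul_of_nonneg_left hsin (abs_nonneg a)
      _ = |a| * |φ| * φ^2 / 4 := by rw [habs3]; ring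
      _ ≤ (ε/4) * φ^2 := by
          have h1 : |a| * |φ| ≤ K * δ :=
            mul_le_mul (by rw [hKdef]; linarith [abs_nonneg c]) hφ (abs_nonneg φ) hK.le
          have h2 : K * δ ≤ ε := by
            calc K * δ ≤ K * (ε/K) := mul_le_mul_of_nonneg_left hδleεK hK.le
              _ = ε := by field_simp
          nlinarith [sq_nonneg φ]
  have hC : |(c/2) * (φ * (φ - Real.sin φ))| ≤ (ε/8) * φ^2 := by
    rw [abs_mul, abs_mul]
    have h4 : |c/2| * (|φ| * |φ - Real.sin φ|) ≤ |c/2| * (|φ| * (|φ|^3/4)) := by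
      apply mul_le_mul_of_nonneg_left _ (abs_nonneg _)
      exact mul_le_mul_of_nonneg_left hsin (abs_nonneg φ)
    calc |c/2| * (|φ| * |φ - Real.sin φ|) ≤ |c/2| * (|φ| * (|φ|^3/4)) := h4
      _ = (|c| * (|φ| * |φ|)) * φ^2 / 8 := by
          rw [abs_div, abs_two, habs3]
          ring
      _ ≤ (ε/8) * φ^2 := by
          have h5 : |φ| * |φ| ≤ δ * 1 := by nlinarith [hφ, abs_nonneg φ, hδle1]
          have h6 : |c| * (|φ| * |φ|) ≤ K * δ :=
            mul_le_mul (by rw [hKdef]; linarith [abs_nonneg a]) (by linarith)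
              (mul_nonneg (abs_nonneg φ) (abs_nonneg φ)) hK.le
          have h7 : K * δ ≤ ε := by
            calc K * δ ≤ K * (ε/K) := mul_le_mul_of_nonneg_left hδleεK hK.le
              _ = ε := by field_simp
          nlinarith [sq_nonneg φ]
  calc |f (θ + φ) - f θ - a * Real.sin φ - (c/2) * (φ * Real.sin φ)|
      ≤ |g₁ φ| + |a * (φ - Real.sin φ)| + |(c/2) * (φ * (φ - Real.sin φ))| := by
        rw [hid]; exact (abs_add_le _ _).trans (by gcongr; exact abs_add_le _ _)
    _ ≤ (ε/3) * φ^2 + (ε/4) * φ^2 + (ε/8) * φ^2 :=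
        add_le_add (add_le_add hg₁bound hB) hC
    _ ≤ ε * φ^2 := by nlinarith [sq_nonneg φ]

/-- Generator convergence for the 1D XY chain: if `f` is `2π`-periodic and twice
continuously differentiable and `B_n / n → b ∈ (0, ∞)`, then
`n (𝒦_{B_n} f - f)(θ) → f''(θ)/(2b)` for every `θ`. -/
theorem xy_generator_convergence (f : ℝ → ℝ)
    (hper : Function.Periodic f (2 * π)) (hf : ContDiff ℝ 2 f)
    (B : ℕ → ℝ) (hB : ∀ n, 0 < B n) (b : ℝ) (hb : 0 < b)
    (hlim : Tendsto (fun n => B n / n) atTop (nhds b)) :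
    ∀ θ : ℝ, Tendsto (fun n : ℕ => (n : ℝ) * (xyTransOp (B n) f θ - f θ)) atTop
      (nhds (iteratedDeriv 2 f θ / (2 * b))) := by
  intro θ
  have hπ0 := Real.pi_pos
  set a := deriv f θ with hadef
  set d := iteratedDeriv 2 f θ with hddef
  set c := d / 2 with hcdef
  set r : ℝ → ℝ := fun φ => f (θ + φ) - f θ - a * Real.sin φ - c * (φ * Real.sin φ) with hrdef
  have hfc : Continuous f := hf.continuous
  have hrc : Continuous r := by
    apply Continuous.sub
    apply Continuous.sub
    apply Continuous.sub
    · exact hfc.comp (continuous_const.add continuous_id)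
    · exact continuous_const
    · exact continuous_const.mul Real.continuous_sin
    · exact continuous_const.mul (continuous_id.mul Real.continuous_sin)
  have hsmall : ∀ ε > 0, ∃ δ, 0 < δ ∧ δ ≤ 1 ∧ ∀ φ, |φ| ≤ δ → |r φ| ≤ ε * φ^2 := by
    intro ε hε
    obtain ⟨δ, h1, h2, h3⟩ := taylor_small f hf θ ε hε
    exact ⟨δ, h1, h2, fun φ hφ => by
      simpa only [hrdef, hadef, hcdef, hddef] using h3 φ hφ⟩
  -- per-n identity
  have hstep : ∀ n : ℕ, xyTransOp (B n) f θ - f θ =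
      (c * ((Zxy (B n) - 2 * π * Real.exp (-(B n))) / (B n))
        + ∫ φ in (-π)..π, Real.exp (B n * Real.cos φ) * r φ) / Zxy (B n) := by
    intro n
    have hBn := hB n
    have hZn := Zxy_pos (B n)
    have hshift : (∫ θ' in (-π)..π, Real.exp (B n * Real.cos (θ' - θ)) * f θ')
        = ∫ φ in (-π)..π, Real.exp (B n * Real.cos φ) * f (θ + φ) := by
      have h1 := intervalIntegral.integral_comp_sub_right
        (a := -π) (b := π) (fun x => Real.exp (B n * Real.cos x) * f (θ + x)) θ
      have hg : Function.Periodic (fun x => Real.exp (B n * Real.cos x) * f (θ + x)) (2*π) := by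
        intro x
        simp only []
        rw [Real.cos_add_two_pi, show θ + (x + 2*π) = (θ + x) + 2*π by ring, hper (θ + x)]
      have h2 := hg.intervalIntegral_add_eq (-π - θ) (-π)
      rw [show -π - θ + 2*π = π - θ by ring, show -π + 2*π = π by ring] at h2
      have h3 : (∫ θ' in (-π)..π, Real.exp (B n * Real.cos (θ' - θ)) * f (θ + (θ' - θ)))
          = ∫ θ' in (-π)..π, Real.exp (B n * Real.cos (θ' - θ)) * f θ' := by
        congr 1
        funext θ'
        rw [show θ + (θ' - θ) = θ' by ring]
      rw [← h3, h1, h2]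
    have hop : xyTransOp (B n) f θ
        = (∫ φ in (-π)..π, Real.exp (B n * Real.cos φ) * f (θ + φ)) / Zxy (B n) := by
      unfold xyTransOp xyKernel
      simp only [div_mul_eq_mul_div]
      rw [intervalIntegral.integral_div, hshift]
      rfl
    -- integrability of pieces
    have hint0 : ∀ g : ℝ → ℝ, Continuous g →
        IntervalIntegrable (fun φ => Real.exp (B n * Real.cos φ) * g φ)
          MeasureTheory.volume (-π) π :=
      fun g hg => ((contE _).mul hg).intervalIntegrable _ _
    have e1 := hint0 (fun φ => f (θ + φ)) (hfc.comp (continuous_const.add continuous_id))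
    have e2 := hint0 (fun _ => f θ) continuous_const
    have e3 : IntervalIntegrable (fun φ => a * (Real.exp (B n * Real.cos φ) * Real.sin φ))
        MeasureTheory.volume (-π) π :=
      (continuous_const.mul ((contE _).mul Real.continuous_sin)).intervalIntegrable _ _
    have e4 : IntervalIntegrable
        (fun φ => c * (Real.exp (B n * Real.cos φ) * (φ * Real.sin φ)))
        MeasureTheory.volume (-π) π :=
      (continuous_const.mul ((contE _).mul (continuous_id.mul Real.continuous_sin))).intervalIntegrable _ _
    have hsplitfun : (fun φ => Real.exp (B n * Real.cos φ) * r φ)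
        = fun φ => Real.exp (B n * Real.cos φ) * f (θ + φ)
          - Real.exp (B n * Real.cos φ) * f θ
          - a * (Real.exp (B n * Real.cos φ) * Real.sin φ)
          - c * (Real.exp (B n * Real.cos φ) * (φ * Real.sin φ)) := by
      funext φ
      simp only [hrdef]
      ring
    have hIR : (∫ φ in (-π)..π, Real.exp (B n * Real.cos φ) * r φ)
        = (∫ φ in (-π)..π, Real.exp (B n * Real.cos φ) * f (θ + φ))
          - Zxy (B n) * f θ - c * ((Zxy (B n) - 2 * π * Real.exp (-(B n))) / (B n)) := by
      rw [hsplitfun, intervalIntegral.integral_sub ((e1.sub e2).sub e3) e4,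
        intervalIntegral.integral_sub (e1.sub e2) e3,
        intervalIntegral.integral_sub e1 e2,
        intervalIntegral.integral_const_mul, intervalIntegral.integral_const_mul,
        int_exp_sin (B n) hBn.ne', int_exp_phi_sin (B n) hBn]
      have hconst : (∫ φ in (-π)..π, Real.exp (B n * Real.cos φ) * f θ)
          = Zxy (B n) * f θ := by
        rw [intervalIntegral.integral_mul_const]
        rfl
      rw [hconst]
      ring
    rw [hop, hIR]
    field_simp
    ring
  -- limits
  have hBtop : Tendsto (fun n => B n) atTop atTop := by
    have h := Filter.Tendsto.pos_mul_atTop hb hlim tendsto_natCast_atTop_atTop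
    apply h.congr'
    filter_upwards [eventually_ge_atTop 1] with n hn
    have hne : (n:ℝ) ≠ 0 := Nat.cast_ne_zero.mpr (by omega)
    exact div_mul_cancel₀ _ hne
  have hinv : Tendsto (fun n : ℕ => (n:ℝ) / B n) atTop (nhds b⁻¹) := by
    have h := hlim.inv₀ hb.ne'
    exact h.congr fun n => inv_div _ _
  have hZgeπ : ∀ n, π ≤ Zxy (B n) := by
    intro n
    have h := Zxy_lower (B := B n) (hB n).le (half_pos hπ0) (by linarith)
    calc π = 2*(π/2) * Real.exp (B n * Real.cos (π/2)) := by
          rw [Real.cos_pi_div_two, mul_zero, Real.exp_zero]; ring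
      _ ≤ Zxy (B n) := h
  have hexp0 : Tendsto (fun n : ℕ => Real.exp (-(B n)) / Zxy (B n)) atTop (nhds 0) := by
    have hup : ∀ n : ℕ, Real.exp (-(B n)) / Zxy (B n) ≤ Real.exp (-(B n)) / π :=
      fun n => div_le_div_of_nonneg_left (Real.exp_pos _).le hπ0 (hZgeπ n)
    have h1 : Tendsto (fun n : ℕ => Real.exp (-(B n))) atTop (nhds 0) :=
      Real.tendsto_exp_atBot.comp (tendsto_neg_atTop_atBot.comp hBtop)
    have h2 : Tendsto (fun n : ℕ => Real.exp (-(B n)) / π) atTop (nhds 0) := by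
      simpa using h1.div_const π
    exact squeeze_zero (fun n => (div_pos (Real.exp_pos _) (Zxy_pos _)).le) hup h2
  have hkey : Tendsto (fun n : ℕ => B n * (∫ φ in (-π)..π, Real.exp (B n * Real.cos φ) * r φ)
      / Zxy (B n)) atTop (nhds 0) :=
    (key_tendsto r hrc hsmall).comp hBtop
  have hG : Tendsto (fun n : ℕ => c * (((n:ℝ)/B n) * (1 - 2*π*(Real.exp (-(B n))/Zxy (B n))))
      + ((n:ℝ)/B n) * (B n * (∫ φ in (-π)..π, Real.exp (B n * Real.cos φ) * r φ)
        / Zxy (B n))) atTop (nhds (c * (b⁻¹ * (1 - 2*π*0)) + b⁻¹ * 0)) :=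
    ((hinv.mul ((hexp0.const_mul (2*π)).const_sub 1)).const_mul c).add (hinv.mul hkey)
  have hlimval : c * (b⁻¹ * (1 - 2*π*0)) + b⁻¹ * 0 = d / (2*b) := by
    rw [hcdef]
    field_simp
    ring
  rw [← hlimval]
  apply hG.congr'
  filter_upwards [eventually_ge_atTop 1] with n hn
  have hBn := hB n
  have hZn := Zxy_pos (B n)
  rw [hstep n]
  field_simp
end

section
/- Let W be a nonnegative real random variable and suppose there exist γ > 0 and c ∈ ℝ such that log E[W^{2k}] = γ k log k + c k + o(k) as k → ∞ (in particular all even moments are finite). Then there exists a constant c* ∈ (0, ∞) such that log P(W > t) = −c* t^{2/γ} + o(t^{2/γ}) as t → ∞. -/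
set_option maxHeartbeats 4000000


open MeasureTheory Filter Asymptotics

/-- From moment asymptotics to stretched-exponential tail asymptotics: if `W ≥ 0` has all
even moments finite with `log E[W^{2k}] = γ k log k + c k + o(k)`, then there is a
constant `c* ∈ (0, ∞)` with `log P(W > t) = -c* t^{2/γ} + o(t^{2/γ})` as `t → ∞`. -/
theorem tail_asymptotics_of_moment_asymptotics
    {Ω : Type*} [MeasurableSpace Ω] (P : Measure Ω) [IsProbabilityMeasure P]
    (W : Ω → ℝ) (hW : Measurable W) (hWnn : ∀ ω, 0 ≤ W ω)
    (γ : ℝ) (hγ : 0 < γ) (c : ℝ)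
    (hmomint : ∀ k : ℕ, Integrable (fun ω => (W ω) ^ (2 * k)) P)
    (hmom : (fun k : ℕ =>
        Real.log (∫ ω, (W ω) ^ (2 * k) ∂P) - (γ * k * Real.log k + c * k))
      =o[atTop] (fun k : ℕ => (k : ℝ))) :
    ∃ cstar : ℝ, 0 < cstar ∧
      (fun t : ℝ => Real.log (P {ω | t < W ω}).toReal + cstar * t ^ (2 / γ))
        =o[atTop] (fun t : ℝ => t ^ (2 / γ)) := by
  classical
  have hγ' : γ ≠ 0 := ne_of_gt hγ
  set β : ℝ := 2 / γ with hβdef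
  have hβ : 0 < β := by positivity
  set κ : ℝ := Real.exp (-(1 + c / γ)) with hκdef
  have hκ : 0 < κ := Real.exp_pos _
  have hlogκ : Real.log κ = -(1 + c / γ) := Real.log_exp _
  refine ⟨γ * κ, by positivity, ?_⟩
  set M : ℕ → ℝ := fun k => ∫ ω, W ω ^ (2 * k) ∂P with hMdef
  set lM : ℕ → ℝ := fun k => Real.log (M k) with hlMdef
  have hMnn : ∀ k, 0 ≤ M k := fun k => integral_nonneg fun ω => pow_nonneg (hWnn ω) _
  have hJM : ∀ k, ∫⁻ ω, ENNReal.ofReal (W ω ^ (2 * k)) ∂P = ENNReal.ofReal (M k) := fun k =>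
    (ofReal_integral_eq_lintegral_ofReal (hmomint k)
      (ae_of_all _ fun ω => pow_nonneg (hWnn ω) _)).symm
  have hmomb : ∀ ε : ℝ, 0 < ε → ∃ K : ℕ, ∀ k, K ≤ k →
      |lM k - (γ * k * Real.log k + c * k)| ≤ ε * k := by
    intro ε hε
    have h := isLittleO_iff.mp hmom hε
    rw [eventually_atTop] at h
    obtain ⟨K, hK⟩ := h
    refine ⟨K, fun k hk => ?_⟩
    have h2 := hK k hk
    simpa [Real.norm_eq_abs, abs_of_nonneg (show (0:ℝ) ≤ (k:ℝ) from Nat.cast_nonneg k)] using h2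
  -- positivity of moments for large k
  have hMpos : ∃ K : ℕ, ∀ k, K ≤ k → 0 < M k := by
    obtain ⟨K₁, hK₁⟩ := hmomb 1 one_pos
    have hlarge : ∀ᶠ k : ℕ in atTop, 2 ≤ γ * Real.log k + c := by
      have h1 : Tendsto (fun k : ℕ => Real.log (k : ℝ)) atTop atTop :=
        Real.tendsto_log_atTop.comp tendsto_natCast_atTop_atTop
      have h2 : Tendsto (fun k : ℕ => γ * Real.log (k : ℝ) + c) atTop atTop :=
        tendsto_atTop_add_const_right _ c (h1.const_mul_atTop hγ)
      exact h2.eventually_ge_atTop 2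
    obtain ⟨K₂, hK₂⟩ := eventually_atTop.mp hlarge
    refine ⟨max (max K₁ K₂) 1, fun k hk => ?_⟩
    have hk₁ : K₁ ≤ k := le_trans ((le_max_left K₁ K₂).trans (le_max_left _ _)) hk
    have hk₂ : K₂ ≤ k := le_trans ((le_max_right K₁ K₂).trans (le_max_left _ _)) hk
    have hk1 : 1 ≤ k := le_trans (le_max_right _ _) hk
    rcases lt_or_ge 0 (M k) with h | h
    · exact h
    · exfalso
      have hM0 : M k = 0 := le_antisymm h (hMnn k)
      have h0 : lM k = 0 := by rw [hlMdef]; simp only [hM0, Real.log_zero]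
      have habs := hK₁ k hk₁
      rw [h0, abs_sub_comm, sub_zero] at habs
      have hck : (1:ℝ) ≤ (k:ℝ) := by exact_mod_cast hk1
      have h2 := hK₂ k hk₂
      have hge : 2 * (k:ℝ) ≤ γ * (k:ℝ) * Real.log (k:ℝ) + c * (k:ℝ) := by
        have h4 := mul_le_mul_of_nonneg_right h2 (le_trans zero_le_one hck)
        linarith [h4]
      have h3 := le_abs_self (γ * (k:ℝ) * Real.log (k:ℝ) + c * (k:ℝ))
      linarith
  obtain ⟨K₀, hK₀⟩ := hMpos
  have hMexp : ∀ k, K₀ ≤ k → M k = Real.exp (lM k) := fun k hk => (Real.exp_log (hK₀ k hk)).symm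
  -- ### Upper bound
  have HU : ∀ ε : ℝ, 0 < ε → ∀ᶠ t : ℝ in atTop,
      (P {ω | t < W ω}).toReal ≤ Real.exp ((-(γ * κ) + ε) * t ^ β) := by
    intro ε hε
    have hε₁ : (0:ℝ) < ε / (2 * (κ + 1)) := by positivity
    obtain ⟨K₁, hK₁⟩ := hmomb (ε / (2 * (κ + 1))) hε₁
    have htend : Tendsto (fun t : ℝ => t ^ β) atTop atTop := tendsto_rpow_atTop hβ
    have hbig : ∀ᶠ t : ℝ in atTop, 1 ≤ t ∧
        (((max (max K₁ K₀) 1 : ℕ) : ℝ) + 1) / κ ≤ t ^ β ∧ 1 / κ ≤ t ^ β ∧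
        2 * (2 * γ + 1) / ε ≤ t ^ β :=
      (eventually_ge_atTop 1).and ((htend.eventually_ge_atTop _).and
        ((htend.eventually_ge_atTop _).and (htend.eventually_ge_atTop _)))
    filter_upwards [hbig] with t ht
    obtain ⟨ht1, ht2, ht3, ht4⟩ := ht
    have ht0 : (0:ℝ) < t := lt_of_lt_of_le one_pos ht1
    set τ : ℝ := t ^ β with hτdef
    have hτpos : 0 < τ := Real.rpow_pos_of_pos ht0 β
    have hτ1 : 1 ≤ τ := by
      calc (1:ℝ) = 1 ^ β := (Real.one_rpow β).symm
      _ ≤ τ := Real.rpow_le_rpow zero_le_one ht1 hβ.le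
    have hκτpos : (0:ℝ) < κ * τ := by positivity
    have hκτ1 : 1 ≤ κ * τ := by
      have h := (div_le_iff₀ hκ).mp ht3; linarith
    have hKτ : ((max (max K₁ K₀) 1 : ℕ) : ℝ) + 1 ≤ κ * τ := by
      have h := (div_le_iff₀ hκ).mp ht2; linarith
    set k : ℕ := ⌈κ * τ⌉₊ with hkdef
    have hk1 : κ * τ ≤ (k:ℝ) := Nat.le_ceil _
    have hk2 : (k:ℝ) ≤ κ * τ + 1 := (Nat.ceil_lt_add_one (by positivity)).le
    have hkK : ((max (max K₁ K₀) 1 : ℕ):ℝ) < (k:ℝ) := by linarith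
    have hkK' : max (max K₁ K₀) 1 ≤ k := le_of_lt (by exact_mod_cast hkK)
    have hkK₁ : K₁ ≤ k := le_trans ((le_max_left K₁ K₀).trans (le_max_left _ _)) hkK'
    have hkK₀ : K₀ ≤ k := le_trans ((le_max_right K₁ K₀).trans (le_max_left _ _)) hkK'
    have hkpos : (0:ℝ) < (k:ℝ) := by linarith
    -- Markov
    have hmark : P {ω | t < W ω} ≤ ENNReal.ofReal (M k / t ^ (2*k)) := by
      have hmeas : AEMeasurable (fun ω => ENNReal.ofReal (W ω ^ (2*k))) P :=
        (ENNReal.measurable_ofReal.comp (hW.pow_const (2*k))).aemeasurable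
      have hsub : {ω | t < W ω} ⊆
          {ω | ENNReal.ofReal (t ^ (2*k)) ≤ ENNReal.ofReal (W ω ^ (2*k))} :=
        fun ω hω => ENNReal.ofReal_le_ofReal (pow_le_pow_left₀ ht0.le (le_of_lt hω) _)
      have h1 := (measure_mono hsub).trans (meas_ge_le_lintegral_div hmeas
        (by simp [ENNReal.ofReal_eq_zero, not_le, pow_pos ht0]) ENNReal.ofReal_ne_top)
      rwa [hJM k, ← ENNReal.ofReal_div_of_pos (pow_pos ht0 _)] at h1
    have htail : (P {ω | t < W ω}).toReal ≤ M k / t ^ (2*k) := by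
      have h2 := ENNReal.toReal_mono ENNReal.ofReal_ne_top hmark
      rwa [ENNReal.toReal_ofReal (div_nonneg (hMnn k) (pow_nonneg ht0.le _))] at h2
    have hMk : M k = Real.exp (lM k) := hMexp k hkK₀
    have hpow : Real.exp (2*(k:ℝ) * Real.log t) = t ^ (2*k) := by
      rw [show (2:ℝ)*(k:ℝ) = ((2*k : ℕ):ℝ) by push_cast; ring, Real.exp_nat_mul,
        Real.exp_log ht0]
    have key : lM k - 2*(k:ℝ)*Real.log t ≤ (-(γ*κ) + ε) * τ := by
      have hμub : lM k ≤ γ*(k:ℝ)*Real.log (k:ℝ) + c*(k:ℝ) + (ε / (2*(κ+1)))*(k:ℝ) := by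
        linarith [(abs_le.mp (hK₁ k hkK₁)).2]
      have hlogτ : Real.log τ = β * Real.log t := Real.log_rpow ht0 β
      have h2logt : 2 * Real.log t = γ * Real.log τ := by
        rw [hlogτ, hβdef]; field_simp
      have hD : Real.log ((k:ℝ)/(κ*τ)) ≤ 1/(κ*τ) := by
        have h1 := Real.log_le_sub_one_of_pos (show (0:ℝ) < (k:ℝ)/(κ*τ) by positivity)
        have h2 : (k:ℝ)/(κ*τ) ≤ 1 + 1/(κ*τ) := by
          rw [div_le_iff₀ hκτpos]
          have hexpand : (1 + 1/(κ*τ))*(κ*τ) = κ*τ + 1 := by field_simp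
          linarith
        linarith
      have hlogk : Real.log (k:ℝ) = Real.log (κ*τ) + Real.log ((k:ℝ)/(κ*τ)) := by
        rw [Real.log_div (ne_of_gt hkpos) (ne_of_gt hκτpos)]; ring
      have hlogκτ : Real.log (κ*τ) = Real.log κ + Real.log τ :=
        Real.log_mul (ne_of_gt hκ) (ne_of_gt hτpos)
      have hγκc : γ * Real.log κ = -γ - c := by rw [hlogκ]; field_simp; ring
      have e1 : γ*(k:ℝ)*Real.log (k:ℝ) + c*(k:ℝ) - 2*(k:ℝ)*Real.log t
          = γ*(k:ℝ)*Real.log ((k:ℝ)/(κ*τ)) - γ*(k:ℝ) := by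
        have h2logt' : Real.log t = γ * Real.log τ / 2 := by linarith
        rw [hlogk, hlogκτ, h2logt']
        linear_combination (k:ℝ) * hγκc
      have d1 : γ*(k:ℝ)*Real.log ((k:ℝ)/(κ*τ)) ≤ 2*γ := by
        have h1 : γ*(k:ℝ)*Real.log ((k:ℝ)/(κ*τ)) ≤ γ*(k:ℝ)*(1/(κ*τ)) :=
          mul_le_mul_of_nonneg_left hD (by positivity)
        have h2 : γ*(k:ℝ)*(1/(κ*τ)) ≤ γ*(κ*τ+1)*(1/(κ*τ)) := by
          apply mul_le_mul_of_nonneg_right _ (by positivity)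
          have := mul_le_mul_of_nonneg_left hk2 hγ.le
          linarith [this]
        have h3 : γ*(κ*τ+1)*(1/(κ*τ)) = γ + γ*(1/(κ*τ)) := by field_simp
        have h4 : γ*(1/(κ*τ)) ≤ γ := by
          rw [mul_one_div]; exact div_le_self hγ.le hκτ1
        linarith
      have d2 : -(γ*(k:ℝ)) ≤ -(γ*κ)*τ := by
        have := mul_le_mul_of_nonneg_left hk1 hγ.le
        linarith [this]
      have d3 : (ε/(2*(κ+1)))*(k:ℝ) ≤ (ε/2)*τ := by
        have h1 : (k:ℝ) ≤ (κ+1)*τ := by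
          have e : (κ+1)*τ = κ*τ + τ := by ring
          linarith
        have h2 : (ε/(2*(κ+1)))*((κ+1)*τ) = (ε/2)*τ := by field_simp
        have h3 := mul_le_mul_of_nonneg_left h1 hε₁.le
        linarith [h3]
      have d4 : 2*γ ≤ (ε/2)*τ := by
        have h1 := (div_le_iff₀ hε).mp ht4
        linarith
      linarith [hμub, e1, d1, d2, d3, d4]
    calc (P {ω | t < W ω}).toReal ≤ M k / t ^ (2*k) := htail
      _ = Real.exp (lM k - 2*(k:ℝ)*Real.log t) := by rw [hMk, ← hpow, ← Real.exp_sub]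
      _ ≤ _ := Real.exp_le_exp.mpr key
  -- ### Lower bound
  have HL : ∀ ε : ℝ, 0 < ε → ∀ᶠ t : ℝ in atTop,
      Real.exp (-(γ * κ + ε) * t ^ β) ≤ (P {ω | t < W ω}).toReal := by
    intro ε hε
    have hγκ : (0:ℝ) < γ * κ := by positivity
    set σ : ℝ := min (1/2) (ε / (12 * (γ*κ))) with hσdef
    have hσpos : 0 < σ := lt_min (by norm_num) (by positivity)
    have hσhalf : σ ≤ 1/2 := min_le_left _ _
    have hσε : 6 * σ * (γ*κ) ≤ ε/2 := by
      have h1 : σ ≤ ε / (12 * (γ*κ)) := min_le_right _ _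
      have h2 : 6 * (ε / (12 * (γ*κ))) * (γ*κ) = ε/2 := by field_simp; ring
      have h3 : σ * (γ*κ) ≤ (ε / (12 * (γ*κ))) * (γ*κ) :=
        mul_le_mul_of_nonneg_right h1 hγκ.le
      linarith
    set x₀ : ℝ := 1/(1+2*σ) with hx₀def
    have h12σ : (0:ℝ) < 1 + 2*σ := by linarith
    have hx₀pos : 0 < x₀ := by positivity
    have hx₀lt1 : x₀ < 1 := by
      rw [hx₀def, div_lt_one h12σ]; linarith
    have hx₀half : 1/2 ≤ x₀ := by
      rw [hx₀def, le_div_iff₀ h12σ]; linarith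
    set ν₁ : ℝ := x₀ - 1 - Real.log x₀ with hν₁def
    have hν₁pos : 0 < ν₁ := by
      have := Real.log_lt_sub_one_of_pos hx₀pos (ne_of_lt hx₀lt1)
      simp only [hν₁def]; linarith
    set ν : ℝ := min ν₁ (σ^2) with hνdef
    have hνpos : 0 < ν := lt_min hν₁pos (by positivity)
    have hνν₁ : ν ≤ ν₁ := min_le_left _ _
    have hνσ₂ : ν ≤ σ^2 := min_le_right _ _
    obtain ⟨K₁, hK₁⟩ := hmomb (γ*ν/100) (by positivity)
    -- conditions on k that hold eventually
    have hcast : Tendsto (fun n : ℕ => (n:ℝ)) atTop atTop := tendsto_natCast_atTop_atTop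
    have hkcond : ∀ᶠ n : ℕ in atTop,
        (((max K₁ K₀ : ℕ):ℝ) + 1 ≤ (n:ℝ)/2) ∧ ((10:ℝ) ≤ (n:ℝ)) ∧ (6/σ ≤ (n:ℝ)) ∧
        (2*(4*γ + Real.log 4)/(γ*ν₁) ≤ (n:ℝ)) ∧ (40*Real.log 4/(γ*σ^2) ≤ (n:ℝ)) ∧
        (2 ≤ x₀*(n:ℝ)) := by
      have h1 : Tendsto (fun n : ℕ => (n:ℝ)/2) atTop atTop := hcast.atTop_div_const two_pos
      have h2 : Tendsto (fun n : ℕ => x₀*(n:ℝ)) atTop atTop := hcast.const_mul_atTop hx₀pos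
      exact (h1.eventually_ge_atTop _).and ((hcast.eventually_ge_atTop _).and
        ((hcast.eventually_ge_atTop _).and ((hcast.eventually_ge_atTop _).and
        ((hcast.eventually_ge_atTop _).and (h2.eventually_ge_atTop _)))))
    obtain ⟨K, hKall⟩ := eventually_atTop.mp hkcond
    have htend : Tendsto (fun t : ℝ => t ^ β) atTop atTop := tendsto_rpow_atTop hβ
    have hbig : ∀ᶠ t : ℝ in atTop, 1 ≤ t ∧ ((K:ℝ)+1)/κ ≤ t^β ∧
        2*(2*γ + Real.log 2)/ε ≤ t^β :=
      (eventually_ge_atTop 1).and ((htend.eventually_ge_atTop _).and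
        (htend.eventually_ge_atTop _))
    filter_upwards [hbig] with t ht
    obtain ⟨ht1, ht2, ht3⟩ := ht
    have ht0 : (0:ℝ) < t := lt_of_lt_of_le one_pos ht1
    set τ : ℝ := t ^ β with hτdef
    have hτpos : 0 < τ := Real.rpow_pos_of_pos ht0 β
    have hτ1 : 1 ≤ τ := by
      calc (1:ℝ) = 1 ^ β := (Real.one_rpow β).symm
      _ ≤ τ := Real.rpow_le_rpow zero_le_one ht1 hβ.le
    have hκτpos : (0:ℝ) < κ*τ := by positivity
    have hKτ : (K:ℝ) + 1 ≤ κ*τ := by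
      have h := (div_le_iff₀ hκ).mp ht2; linarith
    set k : ℕ := ⌈(1+2*σ)*(κ*τ)⌉₊ with hkdef
    have hk_low : (1+2*σ)*(κ*τ) ≤ (k:ℝ) := Nat.le_ceil _
    have hk_up : (k:ℝ) ≤ (1+2*σ)*(κ*τ) + 1 := (Nat.ceil_lt_add_one (by positivity)).le
    have hkK : K ≤ k := by
      have hσκτ : (0:ℝ) ≤ 2*σ*(κ*τ) := by positivity
      have h1 : (K:ℝ) < (k:ℝ) := by linarith [hσκτ]
      exact le_of_lt (by exact_mod_cast h1)
    obtain ⟨hc2, hc3, hc4, hc5, hc6, hc7⟩ := hKall k hkK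
    have hkpos : (0:ℝ) < (k:ℝ) := by linarith
    have hmaxk : ((max K₁ K₀ : ℕ):ℝ) ≤ (k:ℝ) := by linarith
    have hkK₁ : K₁ ≤ k := by
      have h1 : (K₁:ℝ) ≤ ((max K₁ K₀ : ℕ):ℝ) := by exact_mod_cast le_max_left K₁ K₀
      have : (K₁:ℝ) ≤ (k:ℝ) := le_trans h1 hmaxk
      exact_mod_cast this
    have hkK₀' : K₀ ≤ k := by
      have h1 : (K₀:ℝ) ≤ ((max K₁ K₀ : ℕ):ℝ) := by exact_mod_cast le_max_right K₁ K₀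
      have : (K₀:ℝ) ≤ (k:ℝ) := le_trans h1 hmaxk
      exact_mod_cast this
    -- j, m, n₁
    set j : ℕ := ⌈(1-x₀)*(k:ℝ)⌉₊ with hjdef
    set m : ℕ := ⌈σ*(k:ℝ)/4⌉₊ with hmdef
    have h1x₀ : (0:ℝ) ≤ 1 - x₀ := by linarith
    have hj_low : (1-x₀)*(k:ℝ) ≤ (j:ℝ) := Nat.le_ceil _
    have hj_up : (j:ℝ) ≤ (1-x₀)*(k:ℝ) + 1 :=
      (Nat.ceil_lt_add_one (mul_nonneg h1x₀ (Nat.cast_nonneg k))).le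
    have hjk : j < k := by
      have h1 : (j:ℝ) < (k:ℝ) := by linarith
      exact_mod_cast h1
    have hjkR : (j:ℝ) < (k:ℝ) := by exact_mod_cast hjk
    have hm_low : σ*(k:ℝ)/4 ≤ (m:ℝ) := Nat.le_ceil _
    have hm_up : (m:ℝ) ≤ σ*(k:ℝ)/4 + 1 :=
      (Nat.ceil_lt_add_one (div_nonneg (mul_nonneg hσpos.le (Nat.cast_nonneg k))
        (by norm_num))).le
    have hσk2 : σ*(k:ℝ) ≤ (1/2)*(k:ℝ) := mul_le_mul_of_nonneg_right hσhalf hkpos.le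
    have hm_kR : (m:ℝ) ≤ (k:ℝ) := by linarith
    have hmnn : (0:ℝ) ≤ (m:ℝ) := Nat.cast_nonneg m
    set n₁ : ℕ := k - j with hn₁def
    have hn₁cast : (n₁:ℝ) = (k:ℝ) - (j:ℝ) := by
      rw [hn₁def]; exact_mod_cast Nat.cast_sub hjk.le
    have hn₁pos : (0:ℝ) < (n₁:ℝ) := by rw [hn₁cast]; linarith
    set u : ℝ := (n₁:ℝ)/(k:ℝ) with hudef
    have hupos : 0 < u := div_pos hn₁pos hkpos
    have huk : u * (k:ℝ) = (n₁:ℝ) := by rw [hudef]; field_simp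
    have hju : (j:ℝ) = (1-u)*(k:ℝ) := by
      rw [hudef, hn₁cast]; field_simp; ring
    have hux₀ : u ≤ x₀ := by
      rw [hudef, div_le_iff₀ hkpos, hn₁cast]; linarith
    have hu_ge : x₀ - 1/(k:ℝ) ≤ u := by
      rw [hudef, le_div_iff₀ hkpos, hn₁cast]
      have : (x₀ - 1/(k:ℝ))*(k:ℝ) = x₀*(k:ℝ) - 1 := by field_simp
      linarith
    have hx₀k2 : (1/2)*(k:ℝ) ≤ x₀*(k:ℝ) := mul_le_mul_of_nonneg_right hx₀half hkpos.le
    have hn₁half : (k:ℝ)/2 - 1 ≤ (n₁:ℝ) := by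
      rw [hn₁cast]; linarith
    have hn₁K₁ : K₁ ≤ n₁ := by
      have h1 : (K₁:ℝ) ≤ ((max K₁ K₀ : ℕ):ℝ) := by exact_mod_cast le_max_left K₁ K₀
      have : (K₁:ℝ) ≤ (n₁:ℝ) := by linarith
      exact_mod_cast this
    have hn₁K₀ : K₀ ≤ n₁ := by
      have h1 : (K₀:ℝ) ≤ ((max K₁ K₀ : ℕ):ℝ) := by exact_mod_cast le_max_right K₁ K₀
      have : (K₀:ℝ) ≤ (n₁:ℝ) := by linarith
      exact_mod_cast this
    have hkmK₁ : K₁ ≤ k + m := le_trans hkK₁ (Nat.le_add_right _ _)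
    have hkmK₀ : K₀ ≤ k + m := le_trans hkK₀' (Nat.le_add_right _ _)
    -- x
    set x : ℝ := (κ*τ)/(k:ℝ) with hxdef
    have hxpos : 0 < x := by positivity
    have hxk : x*(k:ℝ) = κ*τ := by rw [hxdef]; field_simp
    have hxx₀ : x ≤ x₀ := by
      rw [hxdef, div_le_iff₀ hkpos]
      have h1 : x₀*((1+2*σ)*(κ*τ)) = κ*τ := by rw [hx₀def]; field_simp
      have h2 : x₀*((1+2*σ)*(κ*τ)) ≤ x₀*(k:ℝ) := mul_le_mul_of_nonneg_left hk_low hx₀pos.le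
      linarith
    set ls : ℝ := Real.log (1+σ) with hlsdef
    set Lk : ℝ := γ*Real.log (k:ℝ) + γ*ls + c + γ with hLdef
    set t₁ : ℝ := Real.exp (Lk/2) with ht₁def
    have ht₁pos : 0 < t₁ := Real.exp_pos _
    -- log identities
    have hlogτ : Real.log τ = β * Real.log t := Real.log_rpow ht0 β
    have h2logt : 2 * Real.log t = γ * Real.log τ := by
      rw [hlogτ, hβdef]; field_simp
    have hγκc : γ * Real.log κ = -γ - c := by rw [hlogκ]; field_simp; ring
    have hsum : Real.log x + Real.log (k:ℝ) = Real.log κ + Real.log τ := by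
      rw [← Real.log_mul (ne_of_gt hxpos) (ne_of_gt hkpos), hxk,
        Real.log_mul (ne_of_gt hκ) (ne_of_gt hτpos)]
    have h2logt' : 2*Real.log t = γ*(Real.log x + Real.log (k:ℝ)) + c + γ := by
      rw [hsum, h2logt]; linear_combination -hγκc
    clear_value σ x₀ ν₁ ν τ k j m n₁ u x ls Lk t₁
    -- moment bounds
    have hμn₁ : lM n₁ ≤ γ*(n₁:ℝ)*Real.log (n₁:ℝ) + c*(n₁:ℝ) + (γ*ν/100)*(n₁:ℝ) := by
      linarith [(abs_le.mp (hK₁ n₁ hn₁K₁)).2]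
    have hμk_low : γ*(k:ℝ)*Real.log (k:ℝ) + c*(k:ℝ) - (γ*ν/100)*(k:ℝ) ≤ lM k := by
      linarith [(abs_le.mp (hK₁ k hkK₁)).1]
    have hμkm : lM (k+m) ≤ γ*((k:ℝ)+(m:ℝ))*Real.log ((k:ℝ)+(m:ℝ)) + c*((k:ℝ)+(m:ℝ))
        + (γ*ν/100)*((k:ℝ)+(m:ℝ)) := by
      have h1 := (abs_le.mp (hK₁ (k+m) hkmK₁)).2
      push_cast at h1
      linarith
    -- (CB)
    have hlogn₁ : Real.log (n₁:ℝ) = Real.log u + Real.log (k:ℝ) := by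
      rw [← huk, Real.log_mul (ne_of_gt hupos) (ne_of_gt hkpos)]
    have hId : 2*(j:ℝ)*Real.log t + (γ*(n₁:ℝ)*Real.log (n₁:ℝ) + c*(n₁:ℝ))
        = γ*(k:ℝ)*Real.log (k:ℝ) + c*(k:ℝ)
          + γ*(k:ℝ)*(u*Real.log u + (1-u)*(1+Real.log x)) := by
      have h1 : 2*(j:ℝ)*Real.log t = (j:ℝ)*(γ*(Real.log x + Real.log (k:ℝ)) + c + γ) := by
        rw [show 2*(j:ℝ)*Real.log t = (j:ℝ)*(2*Real.log t) by ring, h2logt']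
      rw [h1, hlogn₁, hju, show (n₁:ℝ) = u*(k:ℝ) from huk.symm]
      ring
    have hF : u*Real.log u + (1-u)*(1+Real.log x) ≤ -ν₁ + 4/(k:ℝ) := by
      have hlx : Real.log x ≤ Real.log x₀ := Real.log_le_log hxpos hxx₀
      have h1u : 0 ≤ 1 - u := by linarith
      have step1 : u*Real.log u + (1-u)*(1+Real.log x)
          ≤ u*Real.log u + (1-u)*(1+Real.log x₀) := by
        have := mul_nonneg h1u (sub_nonneg.mpr hlx)
        linarith [this]
      set w : ℝ := u/x₀ with hwdef
      have hwpos : 0 < w := by positivity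
      have hwle1 : w ≤ 1 := by rw [hwdef, div_le_one hx₀pos]; exact hux₀
      have hlogu : Real.log u = Real.log w + Real.log x₀ := by
        rw [hwdef, Real.log_div (ne_of_gt hupos) (ne_of_gt hx₀pos)]; ring
      have hu_w : u = w*x₀ := by rw [hwdef]; field_simp
      have hid2 : u*Real.log u + (1-u)*(1+Real.log x₀)
          = x₀*(w*Real.log w + 1 - w) - ν₁ := by
        rw [hlogu, hν₁def]
        rw [hu_w]
        ring
      have hlw : Real.log w ≤ w - 1 := Real.log_le_sub_one_of_pos hwpos
      have hwk : 1 - w ≤ 2/(k:ℝ) := by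
        have h' : x₀ - u ≤ 1/(k:ℝ) := by linarith
        have e : 1 - w = (x₀-u)/x₀ := by rw [hwdef]; field_simp
        rw [e, div_le_div_iff₀ hx₀pos hkpos]
        have h'' : (x₀ - u)*(k:ℝ) ≤ 1 := by
          have := mul_le_mul_of_nonneg_right h' hkpos.le
          have e2 : 1/(k:ℝ)*(k:ℝ) = 1 := by field_simp
          linarith
        linarith [h'', hx₀half]
      have hk4 : 4/((k:ℝ)*(k:ℝ)) ≤ 4/(k:ℝ) := by
        apply div_le_div_of_nonneg_left (by norm_num) hkpos
        have h1 : 1*(k:ℝ) ≤ (k:ℝ)*(k:ℝ) :=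
          mul_le_mul_of_nonneg_right (by linarith) hkpos.le
        linarith
      have hgeo : x₀*(w*Real.log w + 1 - w) ≤ 4/(k:ℝ) := by
        have h1 : w*Real.log w ≤ w*(w-1) := by
          have := mul_le_mul_of_nonneg_left hlw hwpos.le
          linarith
        have h2' : w*Real.log w + 1 - w ≤ (1-w)*(1-w) := by linarith [h1]
        have h2 : x₀*(w*Real.log w + 1 - w) ≤ x₀*((1-w)*(1-w)) :=
          mul_le_mul_of_nonneg_left h2' hx₀pos.le
        have h3 : x₀*((1-w)*(1-w)) ≤ 1*((1-w)*(1-w)) :=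
          mul_le_mul_of_nonneg_right hx₀lt1.le (mul_nonneg (by linarith) (by linarith))
        have hnn : (0:ℝ) ≤ 1 - w := by linarith
        have h4 : (1-w)*(1-w) ≤ (2/(k:ℝ))*(2/(k:ℝ)) :=
          mul_le_mul hwk hwk hnn (by positivity)
        have h5 : (2/(k:ℝ))*(2/(k:ℝ)) = 4/((k:ℝ)*(k:ℝ)) := by field_simp; ring
        linarith
      linarith
    have hCB : 2*(j:ℝ)*Real.log t + lM n₁ ≤ lM k - Real.log 4 := by
      have hb1 : γ*(k:ℝ)*(u*Real.log u + (1-u)*(1+Real.log x))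
          ≤ γ*(k:ℝ)*(-ν₁+4/(k:ℝ)) :=
        mul_le_mul_of_nonneg_left hF (by positivity)
      have hb2 : γ*(k:ℝ)*(-ν₁+4/(k:ℝ)) = -(γ*ν₁*(k:ℝ)) + 4*γ := by field_simp
      have hn₁k : (n₁:ℝ) ≤ (k:ℝ) := by
        have hj0 : (0:ℝ) ≤ (j:ℝ) := Nat.cast_nonneg j
        rw [hn₁cast]; linarith
      have hb3 : (γ*ν/100)*(n₁:ℝ) ≤ (γ*ν/100)*(k:ℝ) :=
        mul_le_mul_of_nonneg_left hn₁k (by positivity)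
      have hb4 : 2*(4*γ + Real.log 4) ≤ γ*ν₁*(k:ℝ) := by
        rw [div_le_iff₀ (by positivity : (0:ℝ) < γ*ν₁)] at hc5
        linarith
      have hb5 : (γ*ν/100)*(k:ℝ) ≤ (γ*ν₁/100)*(k:ℝ) := by
        have h1 : γ*ν ≤ γ*ν₁ := mul_le_mul_of_nonneg_left hνν₁ hγ.le
        have h2 : (γ*ν/100) ≤ (γ*ν₁/100) := by linarith only [h1]
        exact mul_le_mul_of_nonneg_right h2 hkpos.le
      have hlog4pos : (0:ℝ) < Real.log 4 := Real.log_pos (by norm_num)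
      linarith only [hμn₁, hId, hb1, hb2, hb3, hb4, hb5, hμk_low, hlog4pos, hγ]
    -- (CA)
    have hq : Real.log ((k:ℝ)+(m:ℝ)) = Real.log (1+(m:ℝ)/(k:ℝ)) + Real.log (k:ℝ) := by
      rw [← Real.log_mul (by positivity) (ne_of_gt hkpos)]
      congr 1
      field_simp
    have hlq : Real.log (1+(m:ℝ)/(k:ℝ)) ≤ (m:ℝ)/(k:ℝ) := by
      have := Real.log_le_sub_one_of_pos (show (0:ℝ) < 1+(m:ℝ)/(k:ℝ) by positivity)
      linarith
    have hls_low : 2*σ/3 ≤ ls := by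
      have h1 : Real.log (1+σ)⁻¹ ≤ (1+σ)⁻¹ - 1 := Real.log_le_sub_one_of_pos (by positivity)
      rw [Real.log_inv] at h1
      have h3 : (1+σ)⁻¹ - 1 = -(σ/(1+σ)) := by field_simp; ring
      have h2 : 2*σ/3 ≤ σ/(1+σ) := by
        rw [div_le_div_iff₀ (by norm_num) (by linarith : (0:ℝ) < 1+σ)]
        have hσσ := mul_le_mul_of_nonneg_right hσhalf hσpos.le
        linarith [hσσ]
      rw [h3] at h1
      simp only [hlsdef]
      linarith
    have hls_up : ls ≤ σ := by
      have := Real.log_le_sub_one_of_pos (show (0:ℝ) < 1+σ by linarith)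
      simp only [hlsdef]; linarith
    have hCA : lM (k+m) - (m:ℝ)*Lk ≤ lM k - Real.log 4 := by
      have hmk4 : (m:ℝ)/(k:ℝ) ≤ σ/4 + 1/(k:ℝ) := by
        rw [div_le_iff₀ hkpos]
        have e : (σ/4 + 1/(k:ℝ))*(k:ℝ) = σ*(k:ℝ)/4 + 1 := by field_simp
        linarith
      have h1k : 1/(k:ℝ) ≤ σ/6 := by
        rw [div_le_iff₀ hkpos]
        rw [div_le_iff₀ hσpos] at hc4
        linarith
      have step1 : (m:ℝ)/(k:ℝ) - ls ≤ -(σ/4) := by linarith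
      have step2 : γ*(m:ℝ)*((m:ℝ)/(k:ℝ) - ls) ≤ γ*(m:ℝ)*(-(σ/4)) :=
        mul_le_mul_of_nonneg_left step1 (by positivity)
      have step3 : γ*(m:ℝ)*(-(σ/4)) ≤ -(γ*σ^2*(k:ℝ)/16) := by
        have h1 : (γ*σ/4)*(σ*(k:ℝ)/4) ≤ (γ*σ/4)*(m:ℝ) :=
          mul_le_mul_of_nonneg_left hm_low (by positivity)
        linarith [h1]
      have hG1 : γ*((k:ℝ)+(m:ℝ))*Real.log (1+(m:ℝ)/(k:ℝ))
          ≤ γ*((k:ℝ)+(m:ℝ))*((m:ℝ)/(k:ℝ)) :=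
        mul_le_mul_of_nonneg_left hlq (by positivity)
      have hG2 : γ*((k:ℝ)+(m:ℝ))*((m:ℝ)/(k:ℝ)) = γ*(m:ℝ) + γ*(m:ℝ)*((m:ℝ)/(k:ℝ)) := by
        field_simp
      have hIdA : γ*((k:ℝ)+(m:ℝ))*Real.log ((k:ℝ)+(m:ℝ)) + c*((k:ℝ)+(m:ℝ)) - (m:ℝ)*Lk
          = γ*(k:ℝ)*Real.log (k:ℝ) + c*(k:ℝ)
            + (γ*((k:ℝ)+(m:ℝ))*Real.log (1+(m:ℝ)/(k:ℝ)) - γ*(m:ℝ)*(1+ls)) := by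
        rw [hq, hLdef]; ring
      have hb6 : 40*Real.log 4 ≤ γ*σ^2*(k:ℝ) := by
        rw [div_le_iff₀ (by positivity : (0:ℝ) < γ*σ^2)] at hc6
        linarith
      have hε3 : (γ*ν/100)*((k:ℝ)+(m:ℝ)) + (γ*ν/100)*(k:ℝ) ≤ 3*((γ*σ^2/100)*(k:ℝ)) := by
        have h1 : (γ*ν/100)*((k:ℝ)+(m:ℝ)) ≤ (γ*ν/100)*(2*(k:ℝ)) :=
          mul_le_mul_of_nonneg_left (by linarith) (by positivity)
        have h2 : γ*ν ≤ γ*σ^2 := mul_le_mul_of_nonneg_left hνσ₂ hγ.le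
        have h3 : (γ*ν/100)*(k:ℝ) ≤ (γ*σ^2/100)*(k:ℝ) :=
          mul_le_mul_of_nonneg_right (by linarith) hkpos.le
        linarith
      have hlog4pos : (0:ℝ) < Real.log 4 := Real.log_pos (by norm_num)
      -- assemble
      have hmid : γ*((k:ℝ)+(m:ℝ))*Real.log (1+(m:ℝ)/(k:ℝ)) - γ*(m:ℝ)*(1+ls)
          ≤ -(γ*σ^2*(k:ℝ)/16) := by
        have e1 : γ*(m:ℝ) + γ*(m:ℝ)*((m:ℝ)/(k:ℝ)) - γ*(m:ℝ)*(1+ls)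
            = γ*(m:ℝ)*((m:ℝ)/(k:ℝ) - ls) := by ring
        linarith [hG1, hG2, step2, step3]
      linarith only [hμkm, hIdA, hmid, hμk_low, hε3, hb6, hlog4pos]
    -- measure-theoretic part
    set sB : Set Ω := {ω | W ω ≤ t} with hsBdef
    set sM : Set Ω := {ω | t < W ω ∧ W ω ≤ t₁} with hsMdef
    set sA : Set Ω := {ω | t₁ < W ω} with hsAdef
    have hsBm : MeasurableSet sB := measurableSet_le hW measurable_const
    have hsMm : MeasurableSet sM := by
      have : sM = {ω | t < W ω} ∩ {ω | W ω ≤ t₁} := rfl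
      rw [this]
      exact (measurableSet_lt measurable_const hW).inter (measurableSet_le hW measurable_const)
    have hsAm : MeasurableSet sA := measurableSet_lt measurable_const hW
    have hcover : sB ∪ (sM ∪ sA) = Set.univ := by
      ext ω
      simp only [hsBdef, hsMdef, hsAdef, Set.mem_union, Set.mem_setOf_eq, Set.mem_univ,
        iff_true]
      rcases le_or_gt (W ω) t with h | h
      · exact Or.inl h
      · rcases le_or_gt (W ω) t₁ with h' | h'
        · exact Or.inr (Or.inl ⟨h, h'⟩)
        · exact Or.inr (Or.inr h')
    have hsplit : ENNReal.ofReal (Real.exp (lM k)) ≤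
        ∫⁻ ω in sB, ENNReal.ofReal (W ω ^ (2*k)) ∂P
        + (∫⁻ ω in sM, ENNReal.ofReal (W ω ^ (2*k)) ∂P
          + ∫⁻ ω in sA, ENNReal.ofReal (W ω ^ (2*k)) ∂P) := by
      have h0 : ENNReal.ofReal (Real.exp (lM k)) = ∫⁻ ω, ENNReal.ofReal (W ω ^ (2*k)) ∂P := by
        rw [hJM k, ← hMexp k hkK₀']
      rw [h0, ← setLIntegral_univ, ← hcover]
      exact le_trans (lintegral_union_le _ _ _) (add_le_add le_rfl (lintegral_union_le _ _ _))
    -- below piece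
    have hB : ∫⁻ ω in sB, ENNReal.ofReal (W ω ^ (2*k)) ∂P
        ≤ ENNReal.ofReal (Real.exp (lM k - Real.log 4)) := by
      have hBpt : ∀ ω ∈ sB, W ω ^ (2*k) ≤ t ^ (2*j) * W ω ^ (2*n₁) := by
        intro ω hω
        have hjle : j ≤ k := hjk.le
        have hsp : W ω ^ (2*k) = W ω ^ (2*j) * W ω ^ (2*n₁) := by
          rw [← pow_add]
          congr 1
          simp only [hn₁def]
          omega
        rw [hsp]
        exact mul_le_mul_of_nonneg_right (pow_le_pow_left₀ (hWnn ω) hω _)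
          (pow_nonneg (hWnn ω) _)
      calc ∫⁻ ω in sB, ENNReal.ofReal (W ω ^ (2*k)) ∂P
          ≤ ∫⁻ ω in sB, ENNReal.ofReal (t ^ (2*j) * W ω ^ (2*n₁)) ∂P :=
            setLIntegral_mono' hsBm (fun ω hω => ENNReal.ofReal_le_ofReal (hBpt ω hω))
        _ ≤ ∫⁻ ω, ENNReal.ofReal (t ^ (2*j) * W ω ^ (2*n₁)) ∂P :=
            setLIntegral_le_lintegral _ _
        _ = ENNReal.ofReal (t ^ (2*j)) * ∫⁻ ω, ENNReal.ofReal (W ω ^ (2*n₁)) ∂P := by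
            simp_rw [ENNReal.ofReal_mul (pow_nonneg ht0.le _)]
            exact lintegral_const_mul _ (ENNReal.measurable_ofReal.comp (hW.pow_const _))
        _ = ENNReal.ofReal (t ^ (2*j) * M n₁) := by
            rw [hJM n₁, ← ENNReal.ofReal_mul (pow_nonneg ht0.le _)]
        _ ≤ ENNReal.ofReal (Real.exp (lM k - Real.log 4)) := by
            apply ENNReal.ofReal_le_ofReal
            have e1 : t ^ (2*j) = Real.exp (2*(j:ℝ)*Real.log t) := by
              rw [show (2:ℝ)*(j:ℝ) = ((2*j : ℕ):ℝ) by push_cast; ring, Real.exp_nat_mul,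
                Real.exp_log ht0]
            rw [e1, hMexp n₁ hn₁K₀, ← Real.exp_add]
            exact Real.exp_le_exp.mpr hCB
    -- above piece
    have hA : ∫⁻ ω in sA, ENNReal.ofReal (W ω ^ (2*k)) ∂P
        ≤ ENNReal.ofReal (Real.exp (lM k - Real.log 4)) := by
      have hApt : ∀ ω ∈ sA, W ω ^ (2*k) ≤ (Real.exp ((m:ℝ)*Lk))⁻¹ * W ω ^ (2*(k+m)) := by
        intro ω hω
        have hωA : t₁ < W ω := hω
        have ht₁m : t₁ ^ (2*m) ≤ W ω ^ (2*m) := pow_le_pow_left₀ ht₁pos.le (le_of_lt hωA) _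
        have hexp : Real.exp ((m:ℝ)*Lk) = t₁ ^ (2*m) := by
          rw [ht₁def, ← Real.exp_nat_mul]
          congr 1
          push_cast
          ring
        rw [hexp, inv_mul_eq_div, le_div_iff₀ (pow_pos ht₁pos _)]
        calc W ω ^ (2*k) * t₁ ^ (2*m) ≤ W ω ^ (2*k) * W ω ^ (2*m) :=
              mul_le_mul_of_nonneg_left ht₁m (pow_nonneg (hWnn ω) _)
          _ = W ω ^ (2*(k+m)) := by rw [← pow_add]; congr 1; ring
      calc ∫⁻ ω in sA, ENNReal.ofReal (W ω ^ (2*k)) ∂P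
          ≤ ∫⁻ ω in sA, ENNReal.ofReal ((Real.exp ((m:ℝ)*Lk))⁻¹ * W ω ^ (2*(k+m))) ∂P :=
            setLIntegral_mono' hsAm (fun ω hω => ENNReal.ofReal_le_ofReal (hApt ω hω))
        _ ≤ ∫⁻ ω, ENNReal.ofReal ((Real.exp ((m:ℝ)*Lk))⁻¹ * W ω ^ (2*(k+m))) ∂P :=
            setLIntegral_le_lintegral _ _
        _ = ENNReal.ofReal ((Real.exp ((m:ℝ)*Lk))⁻¹)
            * ∫⁻ ω, ENNReal.ofReal (W ω ^ (2*(k+m))) ∂P := by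
            simp_rw [ENNReal.ofReal_mul (inv_nonneg.mpr (Real.exp_pos _).le)]
            exact lintegral_const_mul _ (ENNReal.measurable_ofReal.comp (hW.pow_const _))
        _ = ENNReal.ofReal ((Real.exp ((m:ℝ)*Lk))⁻¹ * M (k+m)) := by
            rw [hJM (k+m), ← ENNReal.ofReal_mul (inv_nonneg.mpr (Real.exp_pos _).le)]
        _ ≤ ENNReal.ofReal (Real.exp (lM k - Real.log 4)) := by
            apply ENNReal.ofReal_le_ofReal
            rw [hMexp (k+m) hkmK₀, ← Real.exp_neg, ← Real.exp_add]
            apply Real.exp_le_exp.mpr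
            linarith [hCA]
    -- middle piece
    have hMid : ∫⁻ ω in sM, ENNReal.ofReal (W ω ^ (2*k)) ∂P
        ≤ ENNReal.ofReal (Real.exp ((k:ℝ)*Lk)) * P {ω | t < W ω} := by
      have hexp : Real.exp ((k:ℝ)*Lk) = t₁ ^ (2*k) := by
        rw [ht₁def, ← Real.exp_nat_mul]
        congr 1
        push_cast
        ring
      have hpt : ∀ ω ∈ sM, ENNReal.ofReal (W ω ^ (2*k))
          ≤ ENNReal.ofReal (Real.exp ((k:ℝ)*Lk)) := by
        intro ω hω
        apply ENNReal.ofReal_le_ofReal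
        rw [hexp]
        exact pow_le_pow_left₀ (hWnn ω) hω.2 _
      calc ∫⁻ ω in sM, ENNReal.ofReal (W ω ^ (2*k)) ∂P
          ≤ ∫⁻ _ω in sM, ENNReal.ofReal (Real.exp ((k:ℝ)*Lk)) ∂P :=
            setLIntegral_mono' hsMm hpt
        _ = ENNReal.ofReal (Real.exp ((k:ℝ)*Lk)) * P sM := setLIntegral_const _ _
        _ ≤ ENNReal.ofReal (Real.exp ((k:ℝ)*Lk)) * P {ω | t < W ω} :=
            mul_le_mul' le_rfl (measure_mono (fun ω hω => hω.1))
    -- combine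
    have hcomb : ENNReal.ofReal (Real.exp (lM k - Real.log 2))
        ≤ ENNReal.ofReal (Real.exp ((k:ℝ)*Lk)) * P {ω | t < W ω} := by
      have h4 : Real.exp (lM k - Real.log 4) + Real.exp (lM k - Real.log 4)
          = Real.exp (lM k - Real.log 2) := by
        rw [Real.exp_sub, Real.exp_sub, Real.exp_log (by norm_num : (0:ℝ) < 4),
          Real.exp_log (by norm_num : (0:ℝ) < 2)]
        ring
      have h5 : ENNReal.ofReal (Real.exp (lM k)) =
          ENNReal.ofReal (Real.exp (lM k - Real.log 2))
          + ENNReal.ofReal (Real.exp (lM k - Real.log 2)) := by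
        rw [← ENNReal.ofReal_add (Real.exp_pos _).le (Real.exp_pos _).le]
        congr 1
        rw [Real.exp_sub, Real.exp_log (by norm_num : (0:ℝ) < 2)]
        ring
      have h6 : ENNReal.ofReal (Real.exp (lM k)) ≤
          ENNReal.ofReal (Real.exp (lM k - Real.log 2))
          + ENNReal.ofReal (Real.exp ((k:ℝ)*Lk)) * P {ω | t < W ω} := by
        calc ENNReal.ofReal (Real.exp (lM k))
            ≤ ∫⁻ ω in sB, ENNReal.ofReal (W ω ^ (2*k)) ∂P
              + (∫⁻ ω in sM, ENNReal.ofReal (W ω ^ (2*k)) ∂P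
                + ∫⁻ ω in sA, ENNReal.ofReal (W ω ^ (2*k)) ∂P) := hsplit
          _ ≤ ENNReal.ofReal (Real.exp (lM k - Real.log 4))
              + (ENNReal.ofReal (Real.exp ((k:ℝ)*Lk)) * P {ω | t < W ω}
                + ENNReal.ofReal (Real.exp (lM k - Real.log 4))) :=
              add_le_add hB (add_le_add hMid hA)
          _ = (ENNReal.ofReal (Real.exp (lM k - Real.log 4))
              + ENNReal.ofReal (Real.exp (lM k - Real.log 4)))
              + ENNReal.ofReal (Real.exp ((k:ℝ)*Lk)) * P {ω | t < W ω} := by ring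
          _ = ENNReal.ofReal (Real.exp (lM k - Real.log 2))
              + ENNReal.ofReal (Real.exp ((k:ℝ)*Lk)) * P {ω | t < W ω} := by
              rw [← ENNReal.ofReal_add (Real.exp_pos _).le (Real.exp_pos _).le, h4]
      rw [h5] at h6
      exact (ENNReal.add_le_add_iff_left ENNReal.ofReal_ne_top).mp h6
    have hdiv : ENNReal.ofReal (Real.exp (lM k - Real.log 2 - (k:ℝ)*Lk)) ≤ P {ω | t < W ω} := by
      have e1 : Real.exp (lM k - Real.log 2 - (k:ℝ)*Lk)
          = Real.exp (lM k - Real.log 2) / Real.exp ((k:ℝ)*Lk) := by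
        rw [← Real.exp_sub]
      rw [e1, ENNReal.ofReal_div_of_pos (Real.exp_pos _)]
      rw [ENNReal.div_le_iff_le_mul
        (Or.inl (by simp [ENNReal.ofReal_eq_zero, not_le, Real.exp_pos]))
        (Or.inl ENNReal.ofReal_ne_top)]
      exact hcomb.trans_eq (mul_comm _ _)
    -- the exponent bound
    have hexp_le : -(γ*κ + ε)*τ ≤ lM k - Real.log 2 - (k:ℝ)*Lk := by
      have ha1 : γ*(k:ℝ)*ls ≤ γ*(k:ℝ)*σ := mul_le_mul_of_nonneg_left hls_up (by positivity)
      have ha2 : (γ*ν/100)*(k:ℝ) ≤ γ*σ*(k:ℝ) := by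
        have h1 : σ^2 ≤ σ := by
          have := mul_le_mul_of_nonneg_right hσhalf hσpos.le
          linarith [this]
        have h2 : γ*ν ≤ γ*σ := mul_le_mul_of_nonneg_left (by linarith only [hνσ₂, h1]) hγ.le
        have hγν : (0:ℝ) ≤ γ*ν := le_of_lt (mul_pos hγ hνpos)
        exact mul_le_mul_of_nonneg_right (by linarith only [h2, hγν]) hkpos.le
      have hquad : (1+2*σ)^2 ≤ 1+6*σ := by
        have := mul_le_mul_of_nonneg_right hσhalf hσpos.le
        linarith [this]
      have hb : γ*(1+2*σ)*(k:ℝ) ≤ γ*(1+2*σ)*((1+2*σ)*(κ*τ)+1) :=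
        mul_le_mul_of_nonneg_left hk_up (by positivity)
      have hb2 : γ*(1+2*σ)*((1+2*σ)*(κ*τ)+1) ≤ γ*κ*τ + 6*σ*(γ*κ)*τ + 2*γ := by
        have e : γ*(1+2*σ)*((1+2*σ)*(κ*τ)+1) = γ*((1+2*σ)^2)*(κ*τ) + γ*(1+2*σ) := by ring
        rw [e]
        have h1 : γ*((1+2*σ)^2)*(κ*τ) ≤ γ*(1+6*σ)*(κ*τ) :=
          mul_le_mul_of_nonneg_right (mul_le_mul_of_nonneg_left hquad hγ.le) hκτpos.le
        have h2 : γ*(1+2*σ) ≤ 2*γ := by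
          have := mul_le_mul_of_nonneg_left hσhalf hγ.le
          linarith [this]
        linarith [h1, h2]
      have ha4 : 6*σ*(γ*κ)*τ ≤ (ε/2)*τ := mul_le_mul_of_nonneg_right hσε hτpos.le
      have ha5 : 2*(2*γ+Real.log 2) ≤ ε*τ := by
        have := (div_le_iff₀ hε).mp ht3
        linarith
      have hkL : (k:ℝ)*Lk = γ*(k:ℝ)*Real.log (k:ℝ) + γ*(k:ℝ)*ls + c*(k:ℝ) + γ*(k:ℝ) := by
        rw [hLdef]; ring
      -- lM k - log2 - kLk ≥ -ε₁k - γk ls - γk - log2 ≥ -γ(1+2σ)k - log2 ≥ ...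
      have hm1 : lM k - Real.log 2 - (k:ℝ)*Lk
          ≥ -((γ*ν/100)*(k:ℝ)) - γ*(k:ℝ)*ls - γ*(k:ℝ) - Real.log 2 := by
        rw [hkL]
        linarith [hμk_low]
      have hm2 : -((γ*ν/100)*(k:ℝ)) - γ*(k:ℝ)*ls - γ*(k:ℝ) ≥ -(γ*(1+2*σ)*(k:ℝ)) := by
        linarith [ha1, ha2]
      have hm3 : -(γ*(1+2*σ)*(k:ℝ)) ≥ -(γ*κ*τ) - 6*σ*(γ*κ)*τ - 2*γ := by linarith [hb, hb2]
      linarith [hm1, hm2, hm3, ha4, ha5]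
    have hfin := le_trans (ENNReal.ofReal_le_ofReal (Real.exp_le_exp.mpr hexp_le)) hdiv
    exact (ENNReal.ofReal_le_iff_le_toReal (measure_ne_top P _)).mp hfin
  -- ### conclusion
  rw [isLittleO_iff]
  intro ε hε
  filter_upwards [HU ε hε, HL ε hε, eventually_ge_atTop (1:ℝ)] with t hu hl ht1
  have ht0 : (0:ℝ) < t := lt_of_lt_of_le one_pos ht1
  have hτnn : 0 ≤ t ^ β := (Real.rpow_pos_of_pos ht0 β).le
  have htailpos : 0 < (P {ω | t < W ω}).toReal := lt_of_lt_of_le (Real.exp_pos _) hl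
  have hlogu : Real.log (P {ω | t < W ω}).toReal ≤ (-(γ*κ) + ε) * t^β :=
    (Real.log_le_iff_le_exp htailpos).mpr hu
  have hlogl : -(γ*κ + ε) * t^β ≤ Real.log (P {ω | t < W ω}).toReal :=
    (Real.le_log_iff_exp_le htailpos).mpr hl
  rw [Real.norm_eq_abs, Real.norm_eq_abs, abs_of_nonneg hτnn]
  rw [abs_le]
  constructor
  · linarith
  · linarith
end
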